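/- For $m \ge 1$ and $\Delta \in (0, \pi]$, the error term $\epsilon_m(\Delta) = \int_0^{\Delta} \left( \frac{1}{2\sin(t/2)} - \frac{1}{t} \right) \sin\left(\left(m+\tfrac{1}{2}\right)t\right) dt$ satisfies $|\epsilon_m(\Delta)| \le \frac{3}{2m}$. -/

import Mathlib

open Real Set MeasureTheory intervalIntegral

noncomputable def hh (t : ℝ) : ℝ := 1 / (2 * Real.sin (t / 2)) - 1 / t

noncomputable def hh' (t : ℝ) : ℝ :=
  1 / t ^ 2 - Real.cos (t / 2) / (2 * Real.sin (t / 2)) ^ 2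

lemma sin_half_pos {t : ℝ} (ht : 0 < t) (ht2 : t ≤ π) : 0 < Real.sin (t / 2) :=
  Real.sin_pos_of_pos_of_lt_pi (by linarith) (by linarith [Real.pi_pos])

lemma hh_nonneg {t : ℝ} (ht : 0 < t) (ht2 : t ≤ π) : 0 ≤ hh t := by
  have hs := sin_half_pos ht ht2
  have h1 : Real.sin (t / 2) ≤ t / 2 := Real.sin_le (by linarith)
  rw [hh, sub_nonneg, div_le_div_iff₀ ht (by linarith)]
  linarith

lemma hh_le_half {t : ℝ} (ht : 0 < t) (ht2 : t ≤ π) : hh t ≤ 1 / 2 := by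
  have hs := sin_half_pos ht ht2
  have key : t ≤ Real.sin (t / 2) * (t + 2) := by
    rcases le_or_gt t 2 with hc | hc
    · have h3 : t / 2 - (t / 2) ^ 3 / 4 < Real.sin (t / 2) :=
        by have := Real.sin_gt_sub_cube (x := t / 2) (by linarith); nlinarith [pow_pos (show (0:ℝ) < t / 2 by linarith) 3]
      nlinarith [pow_pos ht 2, pow_pos ht 3, sq_nonneg t]
    · have h3 : 2 / π * (t / 2) ≤ Real.sin (t / 2) :=
        Real.mul_le_sin (by linarith) (by linarith)
      have hpi : (0:ℝ) < π := Real.pi_pos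
      have hpi4 : π < 4 := by linarith [Real.pi_lt_d2]
      rw [div_mul_eq_mul_div, div_le_iff₀ hpi] at h3
      nlinarith
  rw [hh, sub_le_iff_le_add]
  rw [div_le_iff₀ (by positivity)]
  have h4 : (1 / 2 + 1 / t) * (2 * Real.sin (t / 2)) = Real.sin (t / 2) * (t + 2) / t := by
    field_simp
  rw [h4, le_div_iff₀ ht]
  linarith

lemma hasDerivAt_hh {t : ℝ} (ht : 0 < t) (ht2 : t ≤ π) : HasDerivAt hh (hh' t) t := by
  have hs := sin_half_pos ht ht2
  have d0 : HasDerivAt (fun t : ℝ => 2 * Real.sin (t / 2)) (Real.cos (t / 2)) t := by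
    have h := ((Real.hasDerivAt_sin (t / 2)).comp t ((hasDerivAt_id t).div_const 2)).const_mul 2
    exact h.congr_deriv (by ring)
  have d1 : HasDerivAt (fun t : ℝ => (2 * Real.sin (t / 2))⁻¹)
      (-Real.cos (t / 2) / (2 * Real.sin (t / 2)) ^ 2) t := d0.inv (by positivity)
  have d2 : HasDerivAt (fun t : ℝ => t⁻¹) (-(t ^ 2)⁻¹) t := hasDerivAt_inv ht.ne'
  have := d1.sub d2
  have heq : hh = fun t : ℝ => (2 * Real.sin (t / 2))⁻¹ - t⁻¹ := by
    funext x; simp [hh, one_div]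
  rw [heq]
  exact this.congr_deriv (by rw [hh']; field_simp; ring)

lemma hh'_nonneg {t : ℝ} (ht : 0 < t) (ht2 : t ≤ π) : 0 ≤ hh' t := by
  have hs := sin_half_pos ht ht2
  have hpi : (0:ℝ) < π := Real.pi_pos
  -- key : t^2 * cos(t/2) ≤ (2 sin(t/2))^2
  have hx : 0 < t / 4 := by linarith
  have hx2 : t / 4 < π / 2 := by linarith
  have hcx : 0 < Real.cos (t / 4) := Real.cos_pos_of_mem_Ioo ⟨by linarith, hx2⟩
  have htan : t / 4 < Real.tan (t / 4) := Real.lt_tan hx hx2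
  rw [Real.tan_eq_sin_div_cos, lt_div_iff₀ hcx] at htan
  -- sin(t/2) = 2 sin(t/4) cos(t/4) ≥ 2 (t/4) cos(t/4)^2
  have hdbl : Real.sin (t / 2) = 2 * Real.sin (t / 4) * Real.cos (t / 4) := by
    have := Real.sin_two_mul (t / 4)
    rw [show 2 * (t / 4) = t / 2 by ring] at this
    linarith
  have hsin_ge : t / 2 * Real.cos (t / 4) ^ 2 ≤ Real.sin (t / 2) := by
    rw [hdbl]; nlinarith
  have hcos_half : Real.cos (t / 2) = 2 * Real.cos (t / 4) ^ 2 - 1 := by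
    have := Real.cos_two_mul (t / 4)
    rw [show 2 * (t / 4) = t / 2 by ring] at this
    linarith
  have key : t ^ 2 * Real.cos (t / 2) ≤ (2 * Real.sin (t / 2)) ^ 2 := by
    have h1 : (t / 2 * Real.cos (t / 4) ^ 2) ^ 2 ≤ Real.sin (t / 2) ^ 2 := by
      have h0 : 0 ≤ t / 2 * Real.cos (t / 4) ^ 2 := by positivity
      nlinarith
    have h2 : Real.cos (t / 2) ≤ (Real.cos (t / 4) ^ 2) ^ 2 := by
      rw [hcos_half]; nlinarith [sq_nonneg (Real.cos (t / 4) ^ 2 - 1)]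
    nlinarith [sq_nonneg t]
  rw [hh', sub_nonneg, div_le_div_iff₀ (by positivity) (by positivity)]
  nlinarith

lemma hh'_continuousOn {a b : ℝ} (ha : 0 < a) (hb : b ≤ π) :
    ContinuousOn hh' (Icc a b) := by
  have hpi : (0:ℝ) < π := Real.pi_pos
  apply ContinuousOn.sub
  · exact continuousOn_const.div (by fun_prop) fun x hx =>
      pow_ne_zero 2 (ne_of_gt (lt_of_lt_of_le ha hx.1))
  · exact (Real.continuous_cos.comp (continuous_id.div_const 2)).continuousOn.div
      (by fun_prop) fun x hx =>
      pow_ne_zero 2 (by have := sin_half_pos (lt_of_lt_of_le ha hx.1) (hx.2.trans hb); positivity)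


lemma step_bound {l : ℝ} (hl : 1 ≤ l) {a Δ : ℝ} (ha : 0 < a) (haΔ : a ≤ Δ) (hΔ : Δ ≤ π) :
    |∫ t in a..Δ, hh t * Real.sin (l * t)| ≤ 1 / l := by
  have hl0 : 0 < l := by linarith
  set v : ℝ → ℝ := fun t => -Real.cos (l * t) / l with hv
  have hvd : ∀ t : ℝ, HasDerivAt v (Real.sin (l * t)) t := by
    intro t
    have h := ((Real.hasDerivAt_cos (l * t)).comp t
      ((hasDerivAt_id t).const_mul l)).neg.div_const l
    exact h.congr_deriv (by field_simp)
  have hmemt : ∀ t ∈ Icc a Δ, 0 < t ∧ t ≤ π := fun t ht => ⟨lt_of_lt_of_le ha ht.1, ht.2.trans hΔ⟩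
  have hu : ∀ x ∈ uIcc a Δ, HasDerivAt hh (hh' x) x := by
    rw [uIcc_of_le haΔ]
    exact fun x hx => hasDerivAt_hh (hmemt x hx).1 (hmemt x hx).2
  have hu' : IntervalIntegrable hh' volume a Δ := by
    apply ContinuousOn.intervalIntegrable
    rw [uIcc_of_le haΔ]
    exact hh'_continuousOn ha hΔ
  have hv' : IntervalIntegrable (fun t => Real.sin (l * t)) volume a Δ := by
    apply ContinuousOn.intervalIntegrable; fun_prop
  have ibp := intervalIntegral.integral_mul_deriv_eq_deriv_mul hu
    (fun x _ => hvd x) hu' hv'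
  have ftc : ∫ t in a..Δ, hh' t = hh Δ - hh a :=
    intervalIntegral.integral_eq_sub_of_hasDerivAt hu hu'
  have hha := hh_nonneg ha (haΔ.trans hΔ)
  have hhΔle := hh_le_half (lt_of_lt_of_le ha haΔ) hΔ
  have hmono : hh a ≤ hh Δ := by
    rw [← sub_nonneg, ← ftc]
    apply intervalIntegral.integral_nonneg haΔ
    exact fun x hx => hh'_nonneg (hmemt x hx).1 (hmemt x hx).2
  have hvbd : ∀ t, |v t| ≤ 1 / l := by
    intro t
    rw [hv]
    rw [abs_div, abs_of_pos hl0, div_le_div_iff_of_pos_right hl0, abs_neg]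
    exact Real.abs_cos_le_one _
  have hbd2 : |∫ t in a..Δ, hh' t * v t| ≤ (hh Δ - hh a) / l := by
    have hg : IntervalIntegrable (fun t => hh' t / l) volume a Δ := hu'.div_const l
    have hae : ∀ᵐ t ∂(volume.restrict (uIoc a Δ)), ‖hh' t * v t‖ ≤ hh' t / l := by
      rw [uIoc_of_le haΔ]
      refine (ae_restrict_iff' measurableSet_Ioc).2 (Filter.Eventually.of_forall fun t ht => ?_)
      have h0 : 0 < t := lt_of_lt_of_le ha ht.1.le
      have hnn := hh'_nonneg h0 (ht.2.trans hΔ)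
      rw [Real.norm_eq_abs, abs_mul, abs_of_nonneg hnn, div_eq_mul_inv, ← one_div]
      exact mul_le_mul_of_nonneg_left (hvbd t) hnn
    have h := intervalIntegral.norm_integral_le_abs_of_norm_le hae hg
    rw [Real.norm_eq_abs] at h
    refine h.trans ?_
    rw [intervalIntegral.integral_div, ftc, abs_div, abs_of_pos hl0,
      abs_of_nonneg (by linarith)]
  rw [ibp]
  have h1 : |hh Δ * v Δ| ≤ hh Δ / l := by
    rw [abs_mul, abs_of_nonneg (by linarith), div_eq_mul_inv, ← one_div]
    exact mul_le_mul_of_nonneg_left (hvbd Δ) (by linarith)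
  have h2 : |hh a * v a| ≤ hh a / l := by
    rw [abs_mul, abs_of_nonneg hha, div_eq_mul_inv, ← one_div]
    exact mul_le_mul_of_nonneg_left (hvbd a) hha
  calc |hh Δ * v Δ - hh a * v a - ∫ x in a..Δ, hh' x * v x|
      ≤ |hh Δ * v Δ| + |hh a * v a| + |∫ x in a..Δ, hh' x * v x| := by
        exact (abs_sub _ _).trans (by gcongr; exact abs_sub _ _)
    _ ≤ hh Δ / l + hh a / l + (hh Δ - hh a) / l := by gcongr
    _ = 2 * hh Δ / l := by ring
    _ ≤ 1 / l := by
        rw [div_le_div_iff_of_pos_right hl0]; linarith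

theorem epsilon_m_bound (m : ℕ) (hm : 1 ≤ m) (Δ : ℝ)
    (h1 : 0 < Δ) (h2 : Δ ≤ Real.pi) :
    |∫ t in (0:ℝ)..Δ, (1 / (2 * Real.sin (t / 2)) - 1 / t) *
        Real.sin ((m + 1 / 2) * t)| ≤ 3 / (2 * m) := by
  have hm' : (1:ℝ) ≤ (m:ℝ) := by exact_mod_cast hm
  have hm0 : (0:ℝ) < (m:ℝ) := by linarith
  set l : ℝ := (m:ℝ) + 1/2 with hldef
  have hl1 : (1:ℝ) ≤ l := by rw [hldef]; linarith
  have hl0 : (0:ℝ) < l := by linarith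
  show |∫ t in (0:ℝ)..Δ, hh t * Real.sin (l * t)| ≤ 3 / (2 * m)
  have hmeas : AEStronglyMeasurable (fun t => hh t * Real.sin (l * t))
      (volume : Measure ℝ) := by
    apply Measurable.aestronglyMeasurable
    unfold hh
    fun_prop
  have hint : IntervalIntegrable (fun t => hh t * Real.sin (l * t)) volume 0 Δ := by
    rw [intervalIntegrable_iff_integrableOn_Ioc_of_le h1.le]
    refine Measure.integrableOn_of_bounded (M := 1/2) (measure_Ioc_lt_top).ne hmeas ?_
    refine (ae_restrict_iff' measurableSet_Ioc).2 (Filter.Eventually.of_forall fun t ht => ?_)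
    have h0 : 0 < t := ht.1
    have hle := hh_le_half h0 (ht.2.trans h2)
    have hnn := hh_nonneg h0 (ht.2.trans h2)
    rw [Real.norm_eq_abs, abs_mul, abs_of_nonneg hnn]
    calc hh t * |Real.sin (l * t)| ≤ hh t * 1 :=
          mul_le_mul_of_nonneg_left (Real.abs_sin_le_one _) hnn
      _ ≤ 1/2 := by linarith
  have key : ∀ a, 0 < a → a ≤ Δ →
      |∫ t in (0:ℝ)..Δ, hh t * Real.sin (l * t)| ≤ a / 2 + 1 / l := by
    intro a ha haΔ
    have i1 : IntervalIntegrable (fun t => hh t * Real.sin (l * t)) volume 0 a :=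
      hint.mono_set (by rw [uIcc_of_le ha.le, uIcc_of_le h1.le]; exact Icc_subset_Icc le_rfl haΔ)
    have i2 : IntervalIntegrable (fun t => hh t * Real.sin (l * t)) volume a Δ :=
      hint.mono_set (by rw [uIcc_of_le haΔ, uIcc_of_le h1.le]; exact Icc_subset_Icc ha.le le_rfl)
    rw [← intervalIntegral.integral_add_adjacent_intervals i1 i2]
    have b1 : |∫ t in (0:ℝ)..a, hh t * Real.sin (l * t)| ≤ a / 2 := by
      have := intervalIntegral.norm_integral_le_of_norm_le_const (C := 1/2)
        (f := fun t => hh t * Real.sin (l * t)) (a := 0) (b := a) ?_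
      · rw [Real.norm_eq_abs] at this
        refine this.trans ?_
        rw [abs_of_nonneg (by linarith : (0:ℝ) ≤ a - 0)]
        linarith
      · intro x hx
        rw [uIoc_of_le ha.le] at hx
        have h0 : 0 < x := hx.1
        have hle := hh_le_half h0 ((hx.2.trans haΔ).trans h2)
        have hnn := hh_nonneg h0 ((hx.2.trans haΔ).trans h2)
        rw [Real.norm_eq_abs, abs_mul, abs_of_nonneg hnn]
        calc hh x * |Real.sin (l * x)| ≤ hh x * 1 :=
              mul_le_mul_of_nonneg_left (Real.abs_sin_le_one _) hnn
          _ ≤ 1/2 := by linarith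
    calc |(∫ t in (0:ℝ)..a, hh t * Real.sin (l * t)) + ∫ t in a..Δ, hh t * Real.sin (l * t)|
        ≤ |∫ t in (0:ℝ)..a, hh t * Real.sin (l * t)| + |∫ t in a..Δ, hh t * Real.sin (l * t)| :=
          abs_add_le _ _
      _ ≤ a / 2 + 1 / l := add_le_add b1 (step_bound hl1 ha haΔ h2)
  have final : |∫ t in (0:ℝ)..Δ, hh t * Real.sin (l * t)| ≤ 1 / l := by
    refine le_of_forall_pos_le_add fun ε hε => ?_
    have ha : 0 < min Δ ε := lt_min h1 hε
    calc |∫ t in (0:ℝ)..Δ, hh t * Real.sin (l * t)| ≤ min Δ ε / 2 + 1 / l :=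
          key _ ha (min_le_left _ _)
      _ ≤ 1 / l + ε := by
          have := min_le_right Δ ε
          linarith
  refine final.trans ?_
  rw [div_le_div_iff₀ hl0 (by positivity)]
  rw [hldef]
  ring_nf
  nlinarith
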